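/- Let C : ℂ → Matrix (Fin p) (Fin n) ℂ, K : ℂ → Matrix (Fin n) (Fin n) ℂ, B : ℂ → Matrix (Fin n) (Fin m) ℂ, H : ℂ → ℂ → Matrix (Fin n) (Fin (n*n)) ℂ, and σ₁, σ₂, σ₃ ∈ ℂ with K(σ₁), K(σ₂), K(σ₃) invertible. Let V ∈ Matrix (Fin n) (Fin r) ℂ contain in its column span the columns of V₁ := K(σ₁)⁻¹B(σ₁), V₂ := K(σ₂)⁻¹B(σ₂), and V₃ := K(σ₃)⁻¹ H(σ₂,σ₁) (V₂ ⊗ V₁), and let W ∈ Matrix (Fin n) (Fin r) ℂ be such that Wᴴ K(σⱼ) V is invertible for j = 1,2,3. Then with Ĉ(s)=C(s)V, K̂(s)=WᴴK(s)V, B̂(s)=WᴴB(s), Ĥ(s₁,s₂)=WᴴH(s₁,s₂)(V ⊗ V), the reduced transfer function satisfies Ĉ(σ₃) K̂(σ₃)⁻¹ Ĥ(σ₂,σ₁) (K̂(σ₂)⁻¹B̂(σ₂) ⊗ K̂(σ₁)⁻¹B̂(σ₁)) = C(σ₃) K(σ₃)⁻¹ H(σ₂,σ₁) (K(σ₂)⁻¹B(σ₂)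 ⊗ K(σ₁)⁻¹B(σ₁)). -/

import Mathlib

open Matrix Kronecker

theorem stmt_6 {n m p r : ℕ}
    (C : ℂ → Matrix (Fin p) (Fin n) ℂ)
    (K : ℂ → Matrix (Fin n) (Fin n) ℂ)
    (B : ℂ → Matrix (Fin n) (Fin m) ℂ)
    (H : ℂ → ℂ → Matrix (Fin n) (Fin n × Fin n) ℂ)
    (σ₁ σ₂ σ₃ : ℂ)
    (hK1 : IsUnit (K σ₁)) (hK2 : IsUnit (K σ₂)) (hK3 : IsUnit (K σ₃))
    (V W : Matrix (Fin n) (Fin r) ℂ)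
    (V₁ : Matrix (Fin n) (Fin m) ℂ) (hV₁ : V₁ = (K σ₁)⁻¹ * B σ₁)
    (V₂ : Matrix (Fin n) (Fin m) ℂ) (hV₂ : V₂ = (K σ₂)⁻¹ * B σ₂)
    (V₃ : Matrix (Fin n) (Fin m × Fin m) ℂ)
    (hV₃ : V₃ = (K σ₃)⁻¹ * (H σ₂ σ₁ * (V₂ ⊗ₖ V₁)))
    (hVspan₁ : ∃ X, V * X = V₁) (hVspan₂ : ∃ X, V * X = V₂)
    (hVspan₃ : ∃ X, V * X = V₃)
    (hKhat1 : IsUnit (Wᴴ * K σ₁ * V)) (hKhat2 : IsUnit (Wᴴ * K σ₂ * V))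
    (hKhat3 : IsUnit (Wᴴ * K σ₃ * V)) :
    (C σ₃ * V) * (Wᴴ * K σ₃ * V)⁻¹ * (Wᴴ * H σ₂ σ₁ * (V ⊗ₖ V)) *
        (((Wᴴ * K σ₂ * V)⁻¹ * (Wᴴ * B σ₂)) ⊗ₖ ((Wᴴ * K σ₁ * V)⁻¹ * (Wᴴ * B σ₁)))
      = C σ₃ * (K σ₃)⁻¹ * H σ₂ σ₁ *
        (((K σ₂)⁻¹ * B σ₂) ⊗ₖ ((K σ₁)⁻¹ * B σ₁)) := by
  obtain ⟨X₁, hX₁⟩ : ∃ X : Matrix (Fin r) (Fin m) ℂ, V * X = V₁ := hVspan₁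
  obtain ⟨X₂, hX₂⟩ : ∃ X : Matrix (Fin r) (Fin m) ℂ, V * X = V₂ := hVspan₂
  obtain ⟨X₃, hX₃⟩ : ∃ X : Matrix (Fin r) (Fin m × Fin m) ℂ, V * X = V₃ := hVspan₃
  have d1 := (Matrix.isUnit_iff_isUnit_det _).mp hK1
  have d2 := (Matrix.isUnit_iff_isUnit_det _).mp hK2
  have d3 := (Matrix.isUnit_iff_isUnit_det _).mp hK3
  have e1 := (Matrix.isUnit_iff_isUnit_det _).mp hKhat1
  have e2 := (Matrix.isUnit_iff_isUnit_det _).mp hKhat2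
  have e3 := (Matrix.isUnit_iff_isUnit_det _).mp hKhat3
  have hB1 : (Wᴴ * K σ₁ * V) * X₁ = Wᴴ * B σ₁ := by
    rw [Matrix.mul_assoc, hX₁, hV₁, Matrix.mul_assoc,
      Matrix.mul_nonsing_inv_cancel_left _ _ d1]
  have hB2 : (Wᴴ * K σ₂ * V) * X₂ = Wᴴ * B σ₂ := by
    rw [Matrix.mul_assoc, hX₂, hV₂, Matrix.mul_assoc,
      Matrix.mul_nonsing_inv_cancel_left _ _ d2]
  have h1 : (Wᴴ * K σ₁ * V)⁻¹ * (Wᴴ * B σ₁) = X₁ := by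
    rw [← hB1, Matrix.nonsing_inv_mul_cancel_left _ _ e1]
  have h2 : (Wᴴ * K σ₂ * V)⁻¹ * (Wᴴ * B σ₂) = X₂ := by
    rw [← hB2, Matrix.nonsing_inv_mul_cancel_left _ _ e2]
  have hmid : (Wᴴ * H σ₂ σ₁ * (V ⊗ₖ V)) * (X₂ ⊗ₖ X₁)
      = (Wᴴ * K σ₃ * V) * X₃ := by
    rw [Matrix.mul_assoc (Wᴴ * H σ₂ σ₁), ← Matrix.mul_kronecker_mul,
      hX₂, hX₁, Matrix.mul_assoc (Wᴴ * K σ₃), hX₃, hV₃, Matrix.mul_assoc Wᴴ (K σ₃),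
      Matrix.mul_nonsing_inv_cancel_left _ _ d3, Matrix.mul_assoc]
  have h3 : (Wᴴ * K σ₃ * V)⁻¹ * ((Wᴴ * H σ₂ σ₁ * (V ⊗ₖ V)) * (X₂ ⊗ₖ X₁))
      = X₃ := by
    rw [hmid, Matrix.nonsing_inv_mul_cancel_left _ _ e3]
  calc (C σ₃ * V) * (Wᴴ * K σ₃ * V)⁻¹ * (Wᴴ * H σ₂ σ₁ * (V ⊗ₖ V)) *
        (((Wᴴ * K σ₂ * V)⁻¹ * (Wᴴ * B σ₂)) ⊗ₖ ((Wᴴ * K σ₁ * V)⁻¹ * (Wᴴ * B σ₁)))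
      = C σ₃ * V * ((Wᴴ * K σ₃ * V)⁻¹ *
          ((Wᴴ * H σ₂ σ₁ * (V ⊗ₖ V)) * (X₂ ⊗ₖ X₁))) := by
        rw [h1, h2, Matrix.mul_assoc, Matrix.mul_assoc, Matrix.mul_assoc]
    _ = C σ₃ * (V * X₃) := by rw [h3, Matrix.mul_assoc]
    _ = C σ₃ * (K σ₃)⁻¹ * H σ₂ σ₁ * (((K σ₂)⁻¹ * B σ₂) ⊗ₖ ((K σ₁)⁻¹ * B σ₁)) := by
        rw [hX₃, hV₃, hV₂, hV₁, Matrix.mul_assoc, Matrix.mul_assoc]
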